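/- Let k be an odd positive integer and define f_k : ℂ → ℂ by f_k(z) = 2 i^k (z/|z|)^k |z| ∫₀^{π/2} e^{-π|z|²(sin θ)²} sin θ sin(kθ) dθ (with f_k(0) = 0). Then there is a constant C > 0, independent of k, such that |f_k(z)| ≤ C/k for all z ∈ ℂ. Specifically, |f_k(z)| ≤ (2/k) ∫₀^{|z|} e^{-π s²}(1 + 2π s²) ds. -/

import Mathlib

open Real MeasureTheory Complex intervalIntegral

lemma gderiv (r θ : ℝ) :
    HasDerivAt (fun θ => Real.exp (-π * r^2 * Real.sin θ^2) * Real.sin θ)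
      (Real.exp (-π * r^2 * Real.sin θ^2) * Real.cos θ * (1 - 2*π*r^2*Real.sin θ^2)) θ := by
  have hs : HasDerivAt Real.sin (Real.cos θ) θ := Real.hasDerivAt_sin θ
  have hs2 : HasDerivAt (fun θ => Real.sin θ ^ 2) (2 * Real.sin θ * Real.cos θ) θ := by
    simpa [mul_comm] using hs.fun_pow 2
  have he : HasDerivAt (fun θ => Real.exp (-π * r^2 * Real.sin θ^2))
      (Real.exp (-π * r^2 * Real.sin θ^2) * (-π * r^2 * (2 * Real.sin θ * Real.cos θ))) θ :=
    (hs2.const_mul (-π * r^2)).exp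
  have := he.fun_mul hs
  refine this.congr_deriv ?_
  ring

lemma coskderiv (k : ℕ) (hk : k ≠ 0) (θ : ℝ) :
    HasDerivAt (fun θ => -(Real.cos ((k:ℝ)*θ) / k)) (Real.sin ((k:ℝ)*θ)) θ := by
  have h1 : HasDerivAt (fun θ : ℝ => (k:ℝ) * θ) (k:ℝ) θ := by
    simpa using (hasDerivAt_id θ).const_mul (k:ℝ)
  have h2 : HasDerivAt (fun θ => Real.cos ((k:ℝ)*θ)) (-Real.sin ((k:ℝ)*θ) * k) θ :=
    (Real.hasDerivAt_cos _).comp θ h1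
  have := (h2.div_const (k:ℝ)).fun_neg
  refine this.congr_deriv ?_
  have : (k:ℝ) ≠ 0 := Nat.cast_ne_zero.mpr hk
  field_simp

lemma cos_odd_pi_div_two (k : ℕ) (hk : Odd k) : Real.cos ((k:ℝ) * (π/2)) = 0 := by
  obtain ⟨m, hm⟩ := hk
  have : (k:ℝ) * (π/2) = m*π + π/2 := by push_cast [hm]; ring
  rw [this, Real.cos_add, Real.cos_pi_div_two, Real.sin_pi_div_two, Real.sin_nat_mul_pi]
  ring

lemma hsub (r : ℝ) :
    ∫ θ in (0:ℝ)..(π/2), (r * Real.cos θ) *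
      (Real.exp (-π * (r*Real.sin θ)^2) * (1 + 2*π*(r*Real.sin θ)^2)) =
    ∫ s in (0:ℝ)..r, Real.exp (-π*s^2)*(1+2*π*s^2) := by
  have h : ∀ θ ∈ Set.uIcc (0:ℝ) (π/2), HasDerivAt (fun θ => r * Real.sin θ) (r * Real.cos θ) θ :=
    fun θ _ => (Real.hasDerivAt_sin θ).const_mul r
  have h' : ContinuousOn (fun θ => r * Real.cos θ) (Set.uIcc (0:ℝ) (π/2)) :=
    (continuous_const.mul Real.continuous_cos).continuousOn
  have hg : Continuous (fun s : ℝ => Real.exp (-π*s^2)*(1+2*π*s^2)) := by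
    continuity
  have := integral_comp_smul_deriv h h' hg
  simpa [Real.sin_pi_div_two, smul_eq_mul, Function.comp] using this

lemma tail (r : ℝ) (hr : 0 ≤ r) :
    (0 ≤ ∫ s in (0:ℝ)..r, Real.exp (-π*s^2)*(1+2*π*s^2)) ∧
    (∫ s in (0:ℝ)..r, Real.exp (-π*s^2)*(1+2*π*s^2)) ≤ 1 := by
  have hπ := Real.pi_pos
  have hnn : ∀ s : ℝ, 0 ≤ Real.exp (-π*s^2)*(1+2*π*s^2) := by
    intro s
    positivity
  constructor
  · apply intervalIntegral.integral_nonneg hr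
    intro s _; exact hnn s
  have hH : ∀ s : ℝ, HasDerivAt (fun s : ℝ => -(s * Real.exp (-π*s^2)))
      ((2*π*s^2 - 1) * Real.exp (-π*s^2)) s := by
    intro s
    have h1 : HasDerivAt (fun s : ℝ => -π*s^2) (-π*(2*s)) s := by
      simpa [mul_comm, mul_assoc] using ((hasDerivAt_pow 2 s).const_mul (-π))
    have h2 : HasDerivAt (fun s : ℝ => Real.exp (-π*s^2)) (Real.exp (-π*s^2) * (-π*(2*s))) s :=
      h1.exp
    have := ((hasDerivAt_id s).fun_mul h2).fun_neg
    simp only [id_eq] at this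
    refine this.congr_deriv ?_
    ring
  have hcont : Continuous (fun s : ℝ => (2*π*s^2 - 1) * Real.exp (-π*s^2)) := by continuity
  have heq : ∫ s in (0:ℝ)..r, (2*π*s^2 - 1) * Real.exp (-π*s^2)
      = -(r * Real.exp (-π*r^2)) - 0 := by
    have := intervalIntegral.integral_eq_sub_of_hasDerivAt (fun s _ => hH s)
      (hcont.intervalIntegrable 0 r)
    simpa using this
  have hce : Continuous (fun s : ℝ => Real.exp (-π*s^2)) := by continuity
  have hsplit : (∫ s in (0:ℝ)..r, Real.exp (-π*s^2)*(1+2*π*s^2))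
      = (∫ s in (0:ℝ)..r, 2 * Real.exp (-π*s^2))
        + ∫ s in (0:ℝ)..r, (2*π*s^2 - 1) * Real.exp (-π*s^2) := by
    rw [← intervalIntegral.integral_add ((continuous_const.fun_mul hce).intervalIntegrable 0 r)
      (hcont.intervalIntegrable 0 r)]
    congr 1; ext s; ring
  have hgauss : (∫ s in (0:ℝ)..r, Real.exp (-π*s^2)) ≤ 1/2 := by
    have hint : IntegrableOn (fun s : ℝ => Real.exp (-π*s^2)) (Set.Ioi 0) :=
      (integrable_exp_neg_mul_sq hπ).integrableOn
    have h1 : (∫ s in (0:ℝ)..r, Real.exp (-π*s^2))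
        = ∫ s in Set.Ioc 0 r, Real.exp (-π*s^2) := intervalIntegral.integral_of_le hr
    have h2 : (∫ s in Set.Ioc 0 r, Real.exp (-π*s^2))
        ≤ ∫ s in Set.Ioi 0, Real.exp (-π*s^2) := by
      apply MeasureTheory.setIntegral_mono_set hint
      · filter_upwards with s using (Real.exp_pos _).le
      · exact HasSubset.Subset.eventuallyLE Set.Ioc_subset_Ioi_self
    have h3 : (∫ s in Set.Ioi 0, Real.exp (-π*s^2)) = 1/2 := by
      rw [integral_gaussian_Ioi π]
      rw [div_self hπ.ne', Real.sqrt_one]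
    rw [h1]; rw [h3] at h2; exact h2
  calc (∫ s in (0:ℝ)..r, Real.exp (-π*s^2)*(1+2*π*s^2))
      = (∫ s in (0:ℝ)..r, 2 * Real.exp (-π*s^2))
        + ∫ s in (0:ℝ)..r, (2*π*s^2 - 1) * Real.exp (-π*s^2) := hsplit
    _ ≤ 2 * (1/2) + 0 := by
        rw [heq, intervalIntegral.integral_const_mul]
        have h0 : 0 ≤ r * Real.exp (-π*r^2) := by positivity
        have h2 := mul_le_mul_of_nonneg_left hgauss (by norm_num : (0:ℝ) ≤ 2)
        linarith
    _ = 1 := by ring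

lemma key (k : ℕ) (hk : Odd k) (r : ℝ) (hr : 0 ≤ r) :
    r * |∫ θ in (0:ℝ)..(π/2),
        Real.exp (-π * r^2 * Real.sin θ^2) * Real.sin θ * Real.sin ((k:ℝ)*θ)|
    ≤ (1/(k:ℝ)) * ∫ s in (0:ℝ)..r, Real.exp (-π*s^2)*(1+2*π*s^2) := by
  have hπ := Real.pi_pos
  have hk0 : k ≠ 0 := by rintro rfl; exact (Nat.not_odd_iff_even.mpr Even.zero) hk
  set u' : ℝ → ℝ := fun θ =>
    Real.exp (-π * r^2 * Real.sin θ^2) * Real.cos θ * (1 - 2*π*r^2*Real.sin θ^2) with hu'def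
  have hcexp : Continuous (fun θ : ℝ => Real.exp (-π * r^2 * Real.sin θ^2)) :=
    Real.continuous_exp.comp (continuous_const.mul (Real.continuous_sin.pow 2))
  have hcq : Continuous (fun θ : ℝ => 2*π*r^2*Real.sin θ^2) :=
    continuous_const.mul (Real.continuous_sin.pow 2)
  have hcu' : Continuous u' :=
    (hcexp.mul Real.continuous_cos).mul (continuous_const.sub hcq)
  have hcvs : Continuous (fun θ : ℝ => Real.sin ((k:ℝ)*θ)) :=
    Real.continuous_sin.comp (continuous_const.mul continuous_id)
  have hibp := intervalIntegral.integral_mul_deriv_eq_deriv_mul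
    (u := fun θ => Real.exp (-π * r^2 * Real.sin θ^2) * Real.sin θ)
    (v := fun θ => -(Real.cos ((k:ℝ)*θ)/k))
    (u' := u') (v' := fun θ => Real.sin ((k:ℝ)*θ))
    (fun θ _ => gderiv r θ) (fun θ _ => coskderiv k hk0 θ)
    (hcu'.intervalIntegrable 0 (π/2)) (hcvs.intervalIntegrable 0 (π/2))
  have hI : (∫ θ in (0:ℝ)..(π/2),
      Real.exp (-π * r^2 * Real.sin θ^2) * Real.sin θ * Real.sin ((k:ℝ)*θ))
      = (1/(k:ℝ)) * ∫ θ in (0:ℝ)..(π/2), u' θ * Real.cos ((k:ℝ)*θ) := by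
    beta_reduce at hibp
    rw [hibp, cos_odd_pi_div_two k hk]
    have he : (∫ θ in (0:ℝ)..(π/2), u' θ * (-(Real.cos ((k:ℝ)*θ)/k)))
        = ∫ θ in (0:ℝ)..(π/2), (-(1/(k:ℝ))) * (u' θ * Real.cos ((k:ℝ)*θ)) := by
      apply intervalIntegral.integral_congr
      intro θ _
      ring
    rw [he, intervalIntegral.integral_const_mul]
    simp [Real.sin_zero]
  set J := ∫ θ in (0:ℝ)..(π/2), u' θ * Real.cos ((k:ℝ)*θ) with hJ
  set B := ∫ θ in (0:ℝ)..(π/2),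
      Real.exp (-π * r^2 * Real.sin θ^2) * Real.cos θ * (1 + 2*π*r^2*Real.sin θ^2) with hB
  have habs : |J| ≤ B := by
    have hab : (0:ℝ) ≤ π/2 := by positivity
    have h1 := intervalIntegral.abs_integral_le_integral_abs (μ := volume) hab
      (f := fun θ => u' θ * Real.cos ((k:ℝ)*θ))
    refine h1.trans ?_
    apply intervalIntegral.integral_mono_on hab
    · exact ((hcu'.mul (Real.continuous_cos.comp
        (continuous_const.mul continuous_id))).abs).intervalIntegrable 0 (π/2)
    · exact (((hcexp.mul Real.continuous_cos).mul
        (continuous_const.add hcq))).intervalIntegrable 0 (π/2)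
    · intro θ hθ
      have e2 : (0:ℝ) ≤ Real.cos θ :=
        Real.cos_nonneg_of_mem_Icc ⟨by linarith [hθ.1, hπ], hθ.2⟩
      have e1 : |Real.cos ((k:ℝ)*θ)| ≤ 1 := Real.abs_cos_le_one _
      have hpos : (0:ℝ) ≤ 2*π*r^2*Real.sin θ^2 := by positivity
      have e3 : |1 - 2*π*r^2*Real.sin θ^2| ≤ 1 + 2*π*r^2*Real.sin θ^2 :=
        abs_le.mpr ⟨by nlinarith, by nlinarith⟩
      have epos : (0:ℝ) ≤ Real.exp (-π * r^2 * Real.sin θ^2) * Real.cos θ :=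
        mul_nonneg (Real.exp_pos _).le e2
      calc |u' θ * Real.cos ((k:ℝ)*θ)| = |u' θ| * |Real.cos ((k:ℝ)*θ)| := abs_mul _ _
        _ ≤ |u' θ| * 1 := by gcongr
        _ = |Real.exp (-π * r^2 * Real.sin θ^2) * Real.cos θ| * |1 - 2*π*r^2*Real.sin θ^2| := by
            rw [mul_one, hu'def, abs_mul]
        _ ≤ (Real.exp (-π * r^2 * Real.sin θ^2) * Real.cos θ) * (1 + 2*π*r^2*Real.sin θ^2) := by
            rw [_root_.abs_of_nonneg epos]; gcongr
  have hmul : r * B = ∫ s in (0:ℝ)..r, Real.exp (-π*s^2)*(1+2*π*s^2) := by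
    rw [← hsub r, hB, ← intervalIntegral.integral_const_mul]
    apply intervalIntegral.integral_congr
    intro θ _
    simp only [mul_pow]
    ring_nf
  have hknn : (0:ℝ) ≤ 1/(k:ℝ) := by positivity
  calc r * |∫ θ in (0:ℝ)..(π/2),
        Real.exp (-π * r^2 * Real.sin θ^2) * Real.sin θ * Real.sin ((k:ℝ)*θ)|
      = r * ((1/(k:ℝ)) * |J|) := by rw [hI, abs_mul, _root_.abs_of_nonneg hknn]
    _ = (1/(k:ℝ)) * (r * |J|) := by ring
    _ ≤ (1/(k:ℝ)) * (r * B) := by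
        apply mul_le_mul_of_nonneg_left _ hknn
        exact mul_le_mul_of_nonneg_left habs hr
    _ = (1/(k:ℝ)) * ∫ s in (0:ℝ)..r, Real.exp (-π*s^2)*(1+2*π*s^2) := by rw [hmul]


/-- `f_k(z) = 2 i^k (z/|z|)^k |z| ∫₀^{π/2} e^{-π|z|² sin²θ} sin θ sin(kθ) dθ`. -/
noncomputable def fk (k : ℕ) (z : ℂ) : ℂ :=
  2 * Complex.I ^ k * (z / (‖z‖ : ℂ)) ^ k * (‖z‖ : ℂ) *
    ((∫ θ in (0:ℝ)..(π/2),
      Real.exp (-π * ‖z‖ ^ 2 * Real.sin θ ^ 2) * Real.sin θ * Real.sin (k * θ) : ℝ) : ℂ)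

theorem fk_bound :
    ∃ C : ℝ, 0 < C ∧
      ∀ k : ℕ, Odd k →
        ∀ z : ℂ,
          ‖fk k z‖ ≤
              (2 / k) * ∫ s in (0:ℝ)..(‖z‖),
                Real.exp (-π * s ^ 2) * (1 + 2 * π * s ^ 2) ∧
          ‖fk k z‖ ≤ C / k := by
  refine ⟨2, by norm_num, ?_⟩
  intro k hk z
  have hk0 : k ≠ 0 := by rintro rfl; exact (Nat.not_odd_iff_even.mpr Even.zero) hk
  have hkpos : (0:ℝ) < k := by exact_mod_cast Nat.pos_of_ne_zero hk0
  set r := ‖z‖ with hrdef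
  have hr0 : (0:ℝ) ≤ r := norm_nonneg z
  set I := ∫ θ in (0:ℝ)..(π/2),
      Real.exp (-π * r^2 * Real.sin θ^2) * Real.sin θ * Real.sin ((k:ℝ)*θ) with hIdef
  have hmain := key k hk r hr0
  have h1 : ‖fk k z‖ = 2 * ((r/r)^k) * (r * |I|) := by
    rw [fk]
    rw [norm_mul, norm_mul, norm_mul, norm_mul, norm_pow, norm_pow, norm_div]
    rw [Complex.norm_I, Complex.norm_two, Complex.norm_real, Complex.norm_real, Real.norm_eq_abs,
      Real.norm_eq_abs, abs_norm]
    rw [← hrdef, ← hIdef]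
    ring
  have hle : (r/r)^k ≤ 1 := pow_le_one₀ (by positivity) (div_self_le_one r)
  have hb1 : ‖fk k z‖
      ≤ (2 / k) * ∫ s in (0:ℝ)..r, Real.exp (-π * s ^ 2) * (1 + 2 * π * s ^ 2) := by
    calc ‖fk k z‖ = 2 * ((r/r)^k) * (r * |I|) := h1
      _ ≤ 2 * 1 * (r * |I|) := by
          have : (0:ℝ) ≤ r * |I| := mul_nonneg hr0 (abs_nonneg _)
          gcongr
      _ = 2 * (r * |I|) := by ring
      _ ≤ 2 * ((1/(k:ℝ)) * ∫ s in (0:ℝ)..r, Real.exp (-π*s^2)*(1+2*π*s^2)) := by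
          linarith [hmain]
      _ = (2 / k) * ∫ s in (0:ℝ)..r, Real.exp (-π * s ^ 2) * (1 + 2 * π * s ^ 2) := by ring
  refine ⟨hb1, hb1.trans ?_⟩
  have hT := (tail r hr0).2
  calc (2 / (k:ℝ)) * ∫ s in (0:ℝ)..r, Real.exp (-π * s ^ 2) * (1 + 2 * π * s ^ 2)
      ≤ (2 / k) * 1 := by
        apply mul_le_mul_of_nonneg_left hT (by positivity)
    _ = 2 / k := mul_one _
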